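/- Let P be a finite bounded poset, let Γ: m₁,…,m_t be a total order on the maximal chains of P, and let λ be the CE-labeling of P determined by Γ. Fix a root r from 0̂ to x and let a₁,…,a_s be the atoms of [x,1̂] in the order in which they first appear together with r in a maximal chain of Γ. If λ(r,x,a_k) = λ(r,x,a_l) with k ≤ l, then λ(r,x,a_k) = λ(r,x,a_j) for every j with k ≤ j ≤ l. -/

import Mathlib

open scoped Classical

variable {P : Type*} [PartialOrder P] [BoundedOrder P]

/-- `CoverList l` : consecutive entries of `l` are cover relations. -/
def CoverList : List P → Prop
  | x :: y :: t => x ⋖ y ∧ CoverList (y :: t)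
  | _ => True

/-- `SatFromTo l x y` : `l` is a saturated chain (i.e. a maximal chain of the interval
`[x,y]`) starting at `x` and ending at `y`. -/
def SatFromTo (l : List P) (x y : P) : Prop :=
  l ≠ [] ∧ l.head? = some x ∧ l.getLast? = some y ∧ CoverList l

/-- `m` is a maximal chain of the bounded poset `P`. -/
def MaxChainOfP (m : List P) : Prop := SatFromTo m ⊥ ⊤

/-- `r` is a root of `x`, i.e. a maximal chain of `[⊥, x]` (it contains `x`). -/
def RootOf (r : List P) (x : P) : Prop := SatFromTo r ⊥ x

/-- The label sequence of a chain (the second argument, which starts at the last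
element of the root `r`) with respect to a chain-edge labeling `lab`. -/
def labelSeq {Λ : Type*} (lab : List P → P → P → Λ) : List P → List P → List Λ
  | r, x :: y :: t => lab r x y :: labelSeq lab (r ++ [y]) (y :: t)
  | _, _ => []

/-- The pair of rooted cover relations `[u,v]_r`, `[v,w]_{r∪{v}}` is a topological
ascent: its label sequence lexicographically strictly precedes the label sequence of
every other maximal chain of `[u,w]_r`. -/
def TopAscent (lab : List P → P → P → ℤ) (r : List P) (u v w : P) : Prop :=
  ∀ c : List P, SatFromTo c u w → c ≠ [u, v, w] →
    List.Lex (· < ·) (labelSeq lab r [u, v, w]) (labelSeq lab r c)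

/-- The chain (second argument) with root `r` is topologically ascending. -/
def TopAscending (lab : List P → P → P → ℤ) : List P → List P → Prop
  | r, u :: v :: w :: t => TopAscent lab r u v w ∧ TopAscending lab (r ++ [v]) (v :: w :: t)
  | _, _ => True

/-- TCL-labeling : every rooted interval has a unique topologically ascending
maximal chain. -/
def IsTCLLabeling (lab : List P → P → P → ℤ) : Prop :=
  ∀ x y : P, x ≤ y → ∀ r : List P, RootOf r x →
    ∃! c : List P, SatFromTo c x y ∧ TopAscending lab r c

/-- CC-labeling : a TCL-labeling such that in every rooted interval distinct maximal
chains get distinct label sequences, none of which is a prefix of another. -/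
def IsCCLabeling (lab : List P → P → P → ℤ) : Prop :=
  IsTCLLabeling lab ∧
    ∀ x y : P, x ≤ y → ∀ r : List P, RootOf r x →
      ∀ c c' : List P, SatFromTo c x y → SatFromTo c' x y → c ≠ c' →
        ¬ labelSeq lab r c <+: labelSeq lab r c'

/-- CL-labeling with labels in an arbitrary poset `Λ`. -/
def IsCLLabeling {Λ : Type*} [PartialOrder Λ] (lab : List P → P → P → Λ) : Prop :=
  ∀ x y : P, x ≤ y → ∀ r : List P, RootOf r x →
    ∃ c : List P, (SatFromTo c x y ∧ List.Chain' (· < ·) (labelSeq lab r c)) ∧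
      (∀ c' : List P, SatFromTo c' x y → List.Chain' (· < ·) (labelSeq lab r c') → c' = c) ∧
      (∀ c' : List P, SatFromTo c' x y → c' ≠ c →
        List.Lex (· < ·) (labelSeq lab r c) (labelSeq lab r c'))

def TCLShellable (P : Type*) [PartialOrder P] [BoundedOrder P] : Prop :=
  ∃ lab : List P → P → P → ℤ, IsTCLLabeling lab

def CCShellable (P : Type*) [PartialOrder P] [BoundedOrder P] : Prop :=
  ∃ lab : List P → P → P → ℤ, IsCCLabeling lab

def CLShellable (P : Type*) [PartialOrder P] [BoundedOrder P] : Prop :=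
  ∃ (Λ : Type) (_ : PartialOrder Λ) (lab : List P → P → P → Λ), IsCLLabeling lab

/-- `P` is graded : all maximal chains of `P` have the same length. -/
def Graded (P : Type*) [PartialOrder P] [BoundedOrder P] : Prop :=
  ∀ c c' : List P, MaxChainOfP c → MaxChainOfP c' → c.length = c'.length

/-- `Γ` is a total order `m₁, …, m_t` on the maximal chains of `P`. -/
def Enumerates (Γ : List (List P)) : Prop :=
  Γ.Nodup ∧ ∀ m : List P, m ∈ Γ ↔ MaxChainOfP m

/-- `Γ` is a total order on the maximal chains which agrees with (is consistent with)
the lexicographic order on maximal chains induced by `lab`. -/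
def AgreesWithLex (lab : List P → P → P → ℤ) (Γ : List (List P)) : Prop :=
  Enumerates Γ ∧ ∀ i j : ℕ, i < j → j < Γ.length →
    ¬ List.Lex (· < ·) (labelSeq lab [(⊥ : P)] (Γ.getD j []))
        (labelSeq lab [(⊥ : P)] (Γ.getD i []))

/-- Position in `Γ` of the earliest maximal chain containing all elements of `l`. -/
noncomputable def fidx (Γ : List (List P)) (l : List P) : ℕ :=
  Γ.findIdx fun m => decide (∀ a ∈ l, a ∈ m)

/-- `a'` witnesses that the earliest chain containing `r ∪ {a}` is "sandwiched" by
two chains containing `r ∪ {a'}`. -/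
def Sandwiched (Γ : List (List P)) (r : List P) (x a a' : P) : Prop :=
  x ⋖ a' ∧ fidx Γ (r ++ [a']) < fidx Γ (r ++ [a]) ∧
    ∃ l : ℕ, fidx Γ (r ++ [a]) < l ∧ l < Γ.length ∧ ∀ w ∈ r ++ [a'], w ∈ Γ.getD l []

/-- The label (a position in `Γ`) that the CE-labeling determined by the total order
`Γ` assigns to the rooted cover relation `[x,a]_r`. -/
noncomputable def detLabel (Γ : List (List P)) (r : List P) (x a : P) : ℕ :=
  if h : ∃ n : ℕ, ∃ a' : P, Sandwiched Γ r x a a' ∧ fidx Γ (r ++ [a']) = n then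
    detLabel Γ r x (Nat.find_spec h).choose
  else fidx Γ (r ++ [a])
termination_by fidx Γ (r ++ [a])
decreasing_by exact ((Nat.find_spec h).choose_spec).1.2.1

/-- The CE-labeling of `P` determined by the total order `Γ` on maximal chains. -/
noncomputable def detLabeling (Γ : List (List P)) : List P → P → P → ℤ :=
  fun r x a => (detLabel Γ r x a : ℤ)

/-- `Ω` is a recursive first atom set (RFAS) for `P`. -/
def IsRFAS (Ω : List P → P → P → P) : Prop :=
  (∀ c : List P, CoverList c → c.length ≤ 2) ∨
    ∀ x y : P, x < y → ∀ r : List P, RootOf r x →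
      (x ⋖ Ω r x y ∧ Ω r x y ≤ y) ∧
      ∀ a : P, x ⋖ a → a < y →
        (a = Ω r x y ↔ a = Ω r x (Ω (r ++ [a]) a y)) ∧
        (a ≠ Ω r x y →
          ∃ (p : ℕ) (A B : ℕ → P), 1 ≤ p ∧
            (∀ i, 1 ≤ i → i ≤ p → x ⋖ A i ∧ A i ≤ y) ∧
            A p = Ω r x (Ω (r ++ [a]) a y) ∧ A 1 = Ω r x y ∧
            ∀ i, 1 ≤ i → i ≤ p - 1 →
              B i = Ω (r ++ [A (i + 1)]) (A (i + 1)) y ∧ A i = Ω r x (B i))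

/-- The chain (second argument, a saturated chain from the last element of the root to
`y`) is the first atom chain `c(r, x, y)` of the rooted interval with top `y`:
each step except possibly the last follows the first atoms of `Ω`. -/
def IsFAC (Ω : List P → P → P → P) (y : P) : List P → List P → Prop
  | r, x :: z :: t => (t ≠ [] → z = Ω r x y) ∧ IsFAC Ω y (r ++ [z]) (z :: t)
  | _, _ => True

/-- The chain (second argument) with root `r` contains a pseudo descent with respect
to `Ω`. -/
def HasPseudoDescent (Ω : List P → P → P → P) : List P → List P → Prop
  | r, u :: v :: w :: t => v ≠ Ω r u w ∨ HasPseudoDescent Ω (r ++ [v]) (v :: w :: t)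
  | _, _ => False

/-- `m → m'` : `m` is obtained from the maximal chain `m'` by replacing a pseudo
descent `x ⋖ y ⋖ z` of `m'` with the first atom chain `c(m^x, x, z)`. -/
def StepRel (Ω : List P → P → P → P) (m m' : List P) : Prop :=
  MaxChainOfP m ∧ MaxChainOfP m' ∧
    ∃ (x y z : P) (r d c : List P),
      RootOf r x ∧ x ⋖ y ∧ y ⋖ z ∧ y ≠ Ω r x z ∧
      m' = r ++ y :: z :: d ∧
      SatFromTo c x z ∧ IsFAC Ω z r c ∧
      m = r ++ c.tail ++ d

/-- `Γ` is a linear extension of the partial order `⪯` (the reflexive-transitive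
closure of `→`) on the maximal chains of `P`. -/
def LinExtOf (Ω : List P → P → P → P) (Γ : List (List P)) : Prop :=
  Enumerates Γ ∧ ∀ i j : ℕ, i < Γ.length → j < Γ.length →
    Relation.ReflTransGen (StepRel Ω) (Γ.getD i []) (Γ.getD j []) → i ≤ j

/-- `Γ`, a total order on the facets (maximal chains) of the order complex `Δ(P)`,
is a shelling order: for each `j` the intersection of the `j`-th facet with the union
of the earlier ones is pure of dimension one less than that of the `j`-th facet. -/
def IsShelling (Γ : List (List P)) : Prop :=
  ∀ j : ℕ, 0 < j → j < Γ.length → ∀ S : Finset P,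
    S ⊆ (Γ.getD j []).toFinset → (∃ i < j, S ⊆ (Γ.getD i []).toFinset) →
    ∃ T : Finset P, S ⊆ T ∧ T ⊆ (Γ.getD j []).toFinset ∧
      (∃ i < j, T ⊆ (Γ.getD i []).toFinset) ∧
      T.card + 1 = (Γ.getD j []).toFinset.card

/-- Condition (LC) for a linear extension `Γ` of `⪯`. -/
def LCCondition (Γ : List (List P)) : Prop :=
  ∀ i j k : ℕ, i < j → j < k → k < Γ.length →
    ∀ (r : List P) (x y y' z : P), RootOf r x → x ⋖ y → y ⋖ z → x ⋖ y' →
      (∀ w ∈ r ++ [y, z], w ∈ Γ.getD i []) →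
      (∀ w ∈ r ++ [y, z], w ∈ Γ.getD k []) →
      (∀ w ∈ r ++ [y'], w ∈ Γ.getD j []) → y' = y

/-- `Ω` is a labeling-compatible recursive first atom set (LCRFAS). -/
def IsLCRFAS (Ω : List P → P → P → P) : Prop :=
  IsRFAS Ω ∧ ∃ Γ : List (List P), LinExtOf Ω Γ ∧ LCCondition Γ

/-- The CE-labeling `lab` is compatible with the RFAS `Ω` : in every rooted interval
the first atom lies on a lexicographically smallest maximal chain. -/
def Compatible (lab : List P → P → P → ℤ) (Ω : List P → P → P → P) : Prop :=
  ∀ x y : P, x < y → ∀ r : List P, RootOf r x →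
    ∃ c : List P, SatFromTo c x y ∧ Ω r x y ∈ c ∧
      ∀ c' : List P, SatFromTo c' x y →
        ¬ List.Lex (· < ·) (labelSeq lab r c') (labelSeq lab r c)


section Prop45Aux

variable {P : Type*} [PartialOrder P] [BoundedOrder P]

private lemma coverList_chain' : ∀ m : List P, CoverList m → List.Chain' (· < ·) m
  | [], _ => List.isChain_nil
  | [_], _ => List.isChain_singleton _
  | _ :: y :: t, h => List.isChain_cons_cons.2 ⟨h.1.lt, coverList_chain' (y :: t) h.2⟩

private lemma coverList_total {m : List P} (h : CoverList m) {u v : P}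
    (hu : u ∈ m) (hv : v ∈ m) : u ≤ v ∨ v ≤ u := by
  rcases eq_or_ne u v with rfl | hne
  · exact Or.inl le_rfl
  have hp : List.Pairwise (· < ·) m := List.isChain_iff_pairwise.1 (coverList_chain' m h)
  have hp' : List.Pairwise (fun u v : P => u ≤ v ∨ v ≤ u) m :=
    hp.imp fun h => Or.inl h.le
  haveI : Std.Symm (fun u v : P => u ≤ v ∨ v ≤ u) := ⟨fun a b h => h.symm⟩
  exact hp'.forall hu hv hne

private lemma atom_unique {m : List P} (h : CoverList m) {x u v : P} (hxu : x ⋖ u)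
    (hxv : x ⋖ v) (hu : u ∈ m) (hv : v ∈ m) : u = v := by
  rcases coverList_total h hu hv with h' | h'
  · rcases h'.lt_or_eq with h'' | h''
    · exact absurd h'' (hxv.2 hxu.lt)
    · exact h''
  · rcases h'.lt_or_eq with h'' | h''
    · exact absurd h'' (hxu.2 hxv.lt)
    · exact h''.symm

private lemma fidx_le_length (Γ : List (List P)) (l : List P) : fidx Γ l ≤ Γ.length :=
  List.findIdx_le_length

private lemma fidx_le {Γ : List (List P)} {l : List P} {j : ℕ} (hj : j < Γ.length)
    (h : ∀ w ∈ l, w ∈ Γ.getD j []) : fidx Γ l ≤ j := by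
  by_contra hc
  push_neg at hc
  have hc' : j < Γ.findIdx fun m => decide (∀ a ∈ l, a ∈ m) := hc
  have hfalse := List.not_of_lt_findIdx hc'
  rw [List.getD_eq_getElem Γ [] hj] at h
  simp only [decide_eq_false_iff_not] at hfalse
  exact hfalse h

private lemma fidx_spec {Γ : List (List P)} {l : List P} (h : fidx Γ l < Γ.length) :
    ∀ w ∈ l, w ∈ Γ.getD (fidx Γ l) [] := by
  have h' : (Γ.findIdx fun m => decide (∀ a ∈ l, a ∈ m)) < Γ.length := h
  have := List.findIdx_getElem (w := h')
  rw [List.getD_eq_getElem Γ [] h]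
  exact of_decide_eq_true this

private lemma getD_coverList {Γ : List (List P)} (hΓ : Enumerates Γ) {j : ℕ}
    (hj : j < Γ.length) : CoverList (Γ.getD j []) := by
  have hm : Γ.getD j [] ∈ Γ := by
    rw [List.getD_eq_getElem Γ [] hj]; exact List.getElem_mem hj
  exact ((hΓ.2 _).1 hm).2.2.2

private lemma occ_unique {Γ : List (List P)} (hΓ : Enumerates Γ) {r : List P} {j : ℕ}
    (hj : j < Γ.length) {x u v : P} (hxu : x ⋖ u) (hxv : x ⋖ v)
    (hu : ∀ w ∈ r ++ [u], w ∈ Γ.getD j []) (hv : ∀ w ∈ r ++ [v], w ∈ Γ.getD j []) :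
    u = v :=
  atom_unique (getD_coverList hΓ hj) hxu hxv (hu u (by simp)) (hv v (by simp))

private lemma detLabel_eq_fidx {Γ : List (List P)} {r : List P} {x a : P}
    (h : ¬ ∃ a', Sandwiched Γ r x a a') :
    detLabel Γ r x a = fidx Γ (r ++ [a]) := by
  rw [detLabel, dif_neg]
  rintro ⟨n, a', hS, -⟩
  exact h ⟨a', hS⟩

private lemma not_sand_of_top {Γ : List (List P)} {r : List P} {x a : P}
    (h : fidx Γ (r ++ [a]) = Γ.length) : ¬ ∃ a', Sandwiched Γ r x a a' := by
  rintro ⟨a', -, -, l, hl1, hl2, -⟩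
  omega

private lemma detLabel_terminal (Γ : List (List P)) (r : List P) (x : P) :
    ∀ n : ℕ, ∀ a : P, x ⋖ a → fidx Γ (r ++ [a]) ≤ n →
      ∃ b : P, x ⋖ b ∧ fidx Γ (r ++ [b]) ≤ fidx Γ (r ++ [a]) ∧
        (¬ ∃ b', Sandwiched Γ r x b b') ∧ detLabel Γ r x a = fidx Γ (r ++ [b]) := by
  intro n
  induction n using Nat.strong_induction_on with
  | _ n IH =>
  intro a ha hn
  by_cases h : ∃ n : ℕ, ∃ a' : P, Sandwiched Γ r x a a' ∧ fidx Γ (r ++ [a']) = n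
  · have hf := (Nat.find_spec h).choose_spec
    have hSf : Sandwiched Γ r x a (Nat.find_spec h).choose := hf.1
    have hlt : fidx Γ (r ++ [(Nat.find_spec h).choose]) < fidx Γ (r ++ [a]) := hSf.2.1
    obtain ⟨b, hxb, hble, hbuns, hbeq⟩ :=
      IH (fidx Γ (r ++ [(Nat.find_spec h).choose])) (lt_of_lt_of_le hlt hn)
        (Nat.find_spec h).choose hSf.1 le_rfl
    refine ⟨b, hxb, le_trans hble hlt.le, hbuns, ?_⟩
    rw [detLabel, dif_pos h]
    exact hbeq
  · rw [detLabel, dif_neg h]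
    refine ⟨a, ha, le_rfl, ?_, rfl⟩
    rintro ⟨b', hb'⟩
    exact h ⟨_, b', hb', rfl⟩

private lemma detLabel_between (Γ : List (List P)) (hΓ : Enumerates Γ) (r : List P)
    (x : P) :
    ∀ n : ℕ, ∀ a a'' a' : P, x ⋖ a → x ⋖ a'' → x ⋖ a' →
      fidx Γ (r ++ [a]) ≤ fidx Γ (r ++ [a'']) →
      fidx Γ (r ++ [a'']) ≤ fidx Γ (r ++ [a']) →
      fidx Γ (r ++ [a']) ≤ n →
      detLabel Γ r x a = detLabel Γ r x a' →
      detLabel Γ r x a = detLabel Γ r x a'' := by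
  intro n
  induction n using Nat.strong_induction_on with
  | _ n IH =>
  intro a a'' a' ha ha'' ha' h1 h2 hn heq
  obtain ⟨b, hxb, hbA, hbuns, hbeq⟩ :=
    detLabel_terminal Γ r x (fidx Γ (r ++ [a])) a ha le_rfl
  obtain ⟨b', hxb', hbA', hbuns', hbeq'⟩ :=
    detLabel_terminal Γ r x (fidx Γ (r ++ [a'])) a' ha' le_rfl
  have hbb' : fidx Γ (r ++ [b]) = fidx Γ (r ++ [b']) := by
    rw [← hbeq, ← hbeq', heq]
  rcases eq_or_lt_of_le (fidx_le_length Γ (r ++ [b])) with htop | hblt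
  · -- top case : everything has fidx = Γ.length
    have hFa : fidx Γ (r ++ [a]) = Γ.length :=
      le_antisymm (fidx_le_length _ _) (htop ▸ hbA)
    have hFa'' : fidx Γ (r ++ [a'']) = Γ.length :=
      le_antisymm (fidx_le_length _ _) (hFa ▸ h1)
    rw [hbeq, htop, detLabel_eq_fidx (not_sand_of_top (x := x) hFa''), hFa'']
  · have hb'lt : fidx Γ (r ++ [b']) < Γ.length := hbb' ▸ hblt
    have hbeqb' : b = b' := by
      refine occ_unique hΓ hblt hxb hxb' (fidx_spec hblt) ?_
      rw [hbb']
      exact fidx_spec hb'lt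
    subst hbeqb'
    have hFa' : fidx Γ (r ++ [a']) < Γ.length := by
      rcases eq_or_lt_of_le (fidx_le_length Γ (r ++ [a'])) with h | h
      · exfalso
        have h0 := detLabel_eq_fidx (not_sand_of_top (x := x) h)
        rw [h0, h] at hbeq'
        omega
      · exact h
    rcases eq_or_lt_of_le h2 with he2 | h2'
    · -- fidx a'' = fidx a'
      have : a'' = a' := by
        refine occ_unique hΓ (lt_of_le_of_lt he2.le hFa') ha'' ha'
          (fidx_spec (lt_of_le_of_lt he2.le hFa')) ?_
        rw [he2]
        exact fidx_spec hFa'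
      rw [this]
      exact heq
    rcases eq_or_lt_of_le h1 with he1 | h1'
    · have hFa'' : fidx Γ (r ++ [a'']) < Γ.length := lt_trans h2' hFa'
      have : a = a'' := by
        refine occ_unique hΓ (lt_of_le_of_lt he1.le hFa'') ha ha''
          (fidx_spec (lt_of_le_of_lt he1.le hFa'')) ?_
        rw [he1]
        exact fidx_spec hFa''
      rw [this]
    -- now strict inequalities : fidx a < fidx a'' < fidx a'
    have hsand : ∃ n : ℕ, ∃ g : P, Sandwiched Γ r x a' g ∧ fidx Γ (r ++ [g]) = n := by
      by_contra hns
      have hns' : ¬ ∃ g, Sandwiched Γ r x a' g := by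
        rintro ⟨g, hg⟩; exact hns ⟨_, g, hg, rfl⟩
      have h0 := detLabel_eq_fidx hns'
      rw [h0] at hbeq'
      omega
    have hf := (Nat.find_spec hsand).choose_spec
    have hSf : Sandwiched Γ r x a' (Nat.find_spec hsand).choose := hf.1
    set f := (Nat.find_spec hsand).choose with hfdef
    obtain ⟨hxf, hFfa', lf, hlf1, hlf2, hlfmem⟩ := hSf
    have hdf : detLabel Γ r x f = fidx Γ (r ++ [b]) := by
      have hstep : detLabel Γ r x a' = detLabel Γ r x f := by
        conv_lhs => rw [detLabel]
        rw [dif_pos hsand]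
      exact hstep.symm.trans hbeq'
    rcases le_or_gt (fidx Γ (r ++ [f])) (fidx Γ (r ++ [a''])) with hle | hlt
    · rcases eq_or_lt_of_le hle with hee | hee
      · -- f = a''
        have hFf : fidx Γ (r ++ [f]) < Γ.length := lt_trans hFfa' hFa'
        have : a'' = f := by
          refine occ_unique hΓ hFf ha'' hxf ?_ (fidx_spec hFf)
          rw [hee]
          exact fidx_spec (lt_trans h2' hFa')
        rw [hbeq, this, hdf]
      · -- f sandwiches a''
        have hSa'' : Sandwiched Γ r x a'' f :=
          ⟨hxf, hee, lf, lt_trans h2' hlf1, hlf2, hlfmem⟩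
        have hsand'' : ∃ n : ℕ, ∃ g : P, Sandwiched Γ r x a'' g ∧
            fidx Γ (r ++ [g]) = n := ⟨_, f, hSa'', rfl⟩
        have hg := (Nat.find_spec hsand'').choose_spec
        have hSg : Sandwiched Γ r x a'' (Nat.find_spec hsand'').choose := hg.1
        set g := (Nat.find_spec hsand'').choose with hgdef
        have hda'' : detLabel Γ r x a'' = detLabel Γ r x g := by
          rw [detLabel, dif_pos hsand'']
        have hgmin : fidx Γ (r ++ [g]) ≤ fidx Γ (r ++ [f]) := by
          rw [hg.2]
          exact Nat.find_le ⟨f, hSa'', rfl⟩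
        have hbg : fidx Γ (r ++ [b]) ≤ fidx Γ (r ++ [g]) := by
          by_contra hc
          push_neg at hc
          obtain ⟨hxg, hgA, lg, hlg1, hlg2, hlgmem⟩ := hSg
          exact hbuns ⟨g, hxg, hc, lg, by omega, hlg2, hlgmem⟩
        have hIH := IH (fidx Γ (r ++ [f])) (by omega) b g f hxb hSg.1 hxf hbg hgmin
          le_rfl (by rw [detLabel_eq_fidx hbuns, hdf])
        rw [hbeq, hda'', ← hIH, detLabel_eq_fidx hbuns]
    · exact IH (fidx Γ (r ++ [f])) (by omega) a a'' f ha ha'' hxf h1 hlt.le le_rfl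
        (by rw [hbeq, hdf])

end Prop45Aux

/-- Proposition 4.5 (i): for the CE-labeling determined by a total order `Γ` on the
maximal chains, if two atoms `a` and `a'` of `[x, ⊤]_r` (with `a` first appearing no
later than `a'`) receive the same label, then every atom `a''` first appearing between
them receives that same label. -/
theorem stmt2 {P : Type*} [PartialOrder P] [BoundedOrder P] [Fintype P]
    (Γ : List (List P)) (hΓ : Enumerates Γ)
    (x : P) (r : List P) (hr : RootOf r x)
    (a a'' a' : P) (ha : x ⋖ a) (ha'' : x ⋖ a'') (ha' : x ⋖ a')
    (h1 : fidx Γ (r ++ [a]) ≤ fidx Γ (r ++ [a'']))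
    (h2 : fidx Γ (r ++ [a'']) ≤ fidx Γ (r ++ [a']))
    (heq : detLabel Γ r x a = detLabel Γ r x a') :
    detLabel Γ r x a = detLabel Γ r x a'' := by
  exact detLabel_between Γ hΓ r x (fidx Γ (r ++ [a'])) a a'' a' ha ha'' ha' h1 h2
    le_rfl heq
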